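/- Let a and b be probability vectors in R^m. If there exists c < 1/2 such that b_i > c for all i, then KL(a‖b) = Σ_i a_i ln(a_i/b_i) ≤ ‖a − b‖_1 · ln(1/c). -/
import Mathlib


open Real Set

lemma linear_convexOn (K : ℝ) : ConvexOn ℝ (Ici (0:ℝ)) (fun x => x * K) :=
  ⟨convex_Ici 0, fun x _ y _ p q _ _ _ => le_of_eq (by simp [smul_eq_mul]; ring)⟩

lemma linear_concaveOn (K : ℝ) : ConcaveOn ℝ (Ici (0:ℝ)) (fun x => x * K) :=
  ⟨convex_Ici 0, fun x _ y _ p q _ _ _ => le_of_eq (by simp [smul_eq_mul]; ring)⟩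

lemma aux1 {c a : ℝ} (hc0 : 0 < c) (hc : c ≤ 1/2) (hca : c ≤ a) (ha1 : a ≤ 1) :
    a * Real.log (a / c) ≤ 2 * (a - c) * Real.log (1 / c) := by
  have ha0 : 0 < a := lt_of_lt_of_le hc0 hca
  have hlogc : Real.log c ≤ 0 := Real.log_nonpos hc0.le (by linarith)
  have hconv : ConvexOn ℝ (Ici (0:ℝ))
      (fun x => x * Real.log x - x * Real.log (1/c)) :=
    Real.convexOn_mul_log.sub (linear_concaveOn _)
  have hmem : a ∈ segment ℝ c (1:ℝ) := by
    rw [segment_eq_Icc (by linarith : c ≤ (1:ℝ))]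
    exact ⟨hca, ha1⟩
  have h := hconv.le_on_segment (le_of_lt hc0) (by norm_num) hmem
  have hinv : Real.log (1/c) = -Real.log c := by
    rw [one_div, Real.log_inv]
  rw [hinv] at h ⊢
  simp only [Real.log_one] at h
  have h1 : (1:ℝ) * Real.log 1 - 1 * -Real.log c ≤ c * Real.log c - c * -Real.log c := by
    simp only [Real.log_one]
    nlinarith [hlogc]
  have h2 : a * Real.log a - a * -Real.log c ≤ c * Real.log c - c * -Real.log c :=
    le_trans h (max_le le_rfl (by simpa using h1))
  rw [Real.log_div ha0.ne' hc0.ne']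
  nlinarith [h2]

lemma aux2 {c a b : ℝ} (hc0 : 0 < c) (hc : c ≤ 1/2) (hcb : c ≤ b) (hba : b ≤ a)
    (ha1 : a ≤ 1) : a * Real.log (a / b) ≤ 2 * (a - b) * Real.log (1 / c) := by
  have hb0 : 0 < b := lt_of_lt_of_le hc0 hcb
  have ha0 : 0 < a := lt_of_lt_of_le hb0 hba
  have hconv : ConvexOn ℝ (Ioi (0:ℝ))
      (fun x => -(a * Real.log x) + x * (2 * Real.log (1/c))) := by
    have h1 : ConvexOn ℝ (Ioi (0:ℝ)) (fun x => -(a * Real.log x)) := by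
      have h1' : ConcaveOn ℝ (Ioi (0:ℝ)) (fun x => a * Real.log x) := by
        simpa [smul_eq_mul] using strictConcaveOn_log_Ioi.concaveOn.smul ha0.le
      exact h1'.neg
    have h2 : ConvexOn ℝ (Ioi (0:ℝ)) (fun x => x * (2 * Real.log (1/c))) :=
      ((linear_convexOn (2 * Real.log (1/c))).subset (Ioi_subset_Ici le_rfl)
        (convex_Ioi 0))
    exact h1.add h2
  have hmem : b ∈ segment ℝ c a := by
    rw [segment_eq_Icc (le_trans hcb hba)]
    exact ⟨hcb, hba⟩
  have h := hconv.le_on_segment (mem_Ioi.mpr hc0) (mem_Ioi.mpr ha0) hmem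
  set L := Real.log (1/c) with hL
  have hGc : -(a * Real.log c) + c * (2 * L) ≤ -(a * Real.log a) + a * (2 * L) := by
    have := aux1 hc0 hc (le_trans hcb hba) ha1
    rw [Real.log_div ha0.ne' hc0.ne'] at this
    nlinarith [this]
  have h2 : -(a * Real.log b) + b * (2 * L) ≤ -(a * Real.log a) + a * (2 * L) :=
    le_trans h (max_le hGc le_rfl)
  rw [Real.log_div ha0.ne' hb0.ne']
  nlinarith [h2]


/-- for probability vectors `a, b ∈ ℝ^m`, if `0 < c < 1/2` and `b_i > c` for
all `i`, then `KL(a‖b) = Σ_i a_i ln(a_i/b_i) ≤ ‖a − b‖₁ · ln(1/c)` (with the convention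
`0 · ln 0 = 0`, which holds automatically since each term vanishes when `a_i = 0`). -/
theorem kl_le_l1_log (m : ℕ) (a b : Fin m → ℝ) (c : ℝ)
    (hann : ∀ i, 0 ≤ a i) (hasum : ∑ i, a i = 1)
    (hbnn : ∀ i, 0 ≤ b i) (hbsum : ∑ i, b i = 1)
    (hc0 : 0 < c) (hc : c < 1 / 2) (hb : ∀ i, c < b i) :
    ∑ i, a i * Real.log (a i / b i) ≤ (∑ i, |a i - b i|) * Real.log (1 / c) := by
  have hL0 : 0 ≤ Real.log (1/c) := Real.log_nonneg (by rw [le_div_iff₀ hc0]; linarith)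
  have key : ∀ i, a i * Real.log (a i / b i) ≤
      (|a i - b i| + (a i - b i)) * Real.log (1/c) := by
    intro i
    have hbi := hb i
    have hbi0 : 0 < b i := lt_trans hc0 hbi
    by_cases hab : a i ≤ b i
    · have hrhs : (|a i - b i| + (a i - b i)) * Real.log (1/c) = 0 := by
        rw [abs_of_nonpos (by linarith)]; ring
      rw [hrhs]
      rcases eq_or_lt_of_le (hann i) with h0 | h0
      · simp [← h0]
      · have : Real.log (a i / b i) ≤ 0 :=
          Real.log_nonpos (by positivity) ((div_le_one hbi0).mpr hab)
        exact mul_nonpos_of_nonneg_of_nonpos (hann i) this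
    · push_neg at hab
      have ha1 : a i ≤ 1 := by
        rw [← hasum]
        exact Finset.single_le_sum (fun j _ => hann j) (Finset.mem_univ i)
      have := aux2 hc0 hc.le hbi.le hab.le ha1
      rw [abs_of_nonneg (by linarith)]
      calc a i * Real.log (a i / b i) ≤ 2 * (a i - b i) * Real.log (1/c) := this
        _ = (a i - b i + (a i - b i)) * Real.log (1/c) := by ring
  calc ∑ i, a i * Real.log (a i / b i)
      ≤ ∑ i, (|a i - b i| + (a i - b i)) * Real.log (1/c) :=
        Finset.sum_le_sum (fun i _ => key i)
    _ = (∑ i, |a i - b i|) * Real.log (1/c) := by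
        rw [← Finset.sum_mul]
        congr 1
        rw [Finset.sum_add_distrib]
        have : ∑ i, (a i - b i) = 0 := by
          rw [Finset.sum_sub_distrib, hasum, hbsum]; ring
        rw [this, add_zero]
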